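/- Let E_r, A_r ∈ ℝ^{n_r×n_r} with E_r invertible and every complex root λ of det(A_r − λE_r) satisfying Re λ < 0; let E, A ∈ ℝ^{n×n} with A − sE regular; let B_r ∈ ℝ^{n_r×m}, B ∈ ℝ^{n×m}, C ∈ ℝ^{p×n}, and F ∈ ℝ^{m×n} arbitrary. Define E₂₂ := diag(E_r, E), A₂₂ := [[A_r, −B_rF],[0, A]], B₂₂ := [B_r; B], C₂₂ := [0, C]. Suppose F̃ ∈ ℝ^{m×n} is such that A + BF̃ − sE is admissible and H̃ ∈ ℝ^{n×p} is such that A + H̃C − sE is admissible. Then, with F̂ := [0, F̃] ∈ ℝ^{m×(n_r+n)} and Ĥ := [0; H̃] ∈ ℝ^{(n_r+n)×p}, the pencils A₂₂ + B₂₂F̂ − sE₂₂ and A₂₂ + ĤC₂₂ − sE₂₂ are both admissible; in particular, the order-(n_r+n) realization (A₂₂ − sE₂₂, B₂₂, C₂₂) admits admissible state-feedback and output-injection matrices. -/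

import Mathlib

open Matrix Polynomial
open scoped Kronecker

set_option synthInstance.maxHeartbeats 400000
set_option maxHeartbeats 1000000

noncomputable section

/-- The field ℝ(s) of real rational functions. -/
abbrev RF := RatFunc ℝ

/-- A rational function is proper if the degree of its numerator (in lowest terms)
is at most the degree of its denominator. -/
def RFproper (f : RF) : Prop := f.num.degree ≤ f.denom.degree

/-- A rational function is stable: proper and every complex root of its denominator
has strictly negative real part. -/
def RFstable (f : RF) : Prop :=
  RFproper f ∧ ∀ z : ℂ, Polynomial.aeval z f.denom = 0 → z.re < 0

/-- A rational matrix is stable (lies in RH∞) iff every entry is stable. -/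
def MStable {p m : Type*} (G : Matrix p m RF) : Prop := ∀ i j, RFstable (G i j)

/-- A real matrix viewed as a matrix over ℝ(s). -/
def toRF {p m : Type*} (M : Matrix p m ℝ) : Matrix p m RF := M.map (algebraMap ℝ RF)

/-- A real matrix viewed as a matrix over ℂ. -/
def toC {p m : Type*} (M : Matrix p m ℝ) : Matrix p m ℂ := M.map (fun x => (x : ℂ))

/-- The pencil A - s E as a matrix over ℝ(s). -/
def pencilRF {n : Type*} (A E : Matrix n n ℝ) : Matrix n n RF :=
  toRF A - (RatFunc.X : RF) • toRF E

/-- Admissible pencil: regular, every finite generalized eigenvalue in the open left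
half-plane, and deg det(sE - A) = rank E (all infinite generalized eigenvalues have
partial multiplicity at most 1). -/
def Admissible {n : Type*} [Fintype n] [DecidableEq n] (A E : Matrix n n ℝ) : Prop :=
  (pencilRF A E).det ≠ 0 ∧
  (∀ z : ℂ, (toC A - z • toC E).det = 0 → z.re < 0) ∧
  (Matrix.of fun i j => Polynomial.X * Polynomial.C (E i j) - Polynomial.C (A i j)).det.natDegree
    = E.rank

/-- Transfer function matrix C (sE - A)⁻¹ B + D of a descriptor realization. -/
def tfm {n p m : Type*} [Fintype n] [DecidableEq n] (E A : Matrix n n ℝ)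
    (B : Matrix n m ℝ) (C : Matrix p n ℝ) (D : Matrix p m ℝ) : Matrix p m RF :=
  toRF C * ((RatFunc.X : RF) • toRF E - toRF A)⁻¹ * toRF B + toRF D

section Aux

open Polynomial

variable {l κ : Type*} [Fintype l] [DecidableEq l] [Fintype κ] [DecidableEq κ]

/-- The determinant of the polynomial pencil `sE - A`. -/
def qp (A E : Matrix l l ℝ) : Polynomial ℝ :=
  (Matrix.of fun i j => Polynomial.X * Polynomial.C (E i j) - Polynomial.C (A i j)).det

lemma algebraMap_C_RF (r : ℝ) :
    algebraMap (Polynomial ℝ) RF (Polynomial.C r) = algebraMap ℝ RF r := by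
  rw [← Polynomial.algebraMap_eq, ← IsScalarTower.algebraMap_apply]

lemma pencilRF_eq_neg_map (A E : Matrix l l ℝ) :
    pencilRF A E = (-1 : RF) •
      ((Matrix.of fun i j => Polynomial.X * Polynomial.C (E i j) - Polynomial.C (A i j)).map
        (algebraMap (Polynomial ℝ) RF)) := by
  ext i j
  simp only [pencilRF, toRF, Matrix.sub_apply, Matrix.smul_apply, Matrix.map_apply,
    Matrix.of_apply, map_sub, _root_.map_mul, RatFunc.algebraMap_X, algebraMap_C_RF, smul_eq_mul]
  ring

lemma det_pencilRF (A E : Matrix l l ℝ) :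
    (pencilRF A E).det = (-1 : RF) ^ Fintype.card l * algebraMap (Polynomial ℝ) RF (qp A E) := by
  rw [pencilRF_eq_neg_map, Matrix.det_smul, ← RingHom.mapMatrix_apply, ← RingHom.map_det]
  rfl

lemma det_pencilRF_ne_zero_iff (A E : Matrix l l ℝ) :
    (pencilRF A E).det ≠ 0 ↔ qp A E ≠ 0 := by
  rw [det_pencilRF]
  constructor
  · intro h h0
    rw [h0, map_zero, mul_zero] at h
    exact h rfl
  · intro h h0
    rcases mul_eq_zero.mp h0 with h1 | h1
    · exact pow_ne_zero _ (neg_ne_zero.mpr one_ne_zero) h1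
    · exact h ((map_eq_zero_iff _ (RatFunc.algebraMap_injective ℝ)).mp h1)

lemma det_toC_sub_smul (A E : Matrix l l ℝ) (z : ℂ) :
    (toC A - z • toC E).det = (-1 : ℂ) ^ Fintype.card l * Polynomial.aeval z (qp A E) := by
  have hM : toC A - z • toC E = (-1 : ℂ) •
      ((Matrix.of fun i j => Polynomial.X * Polynomial.C (E i j) - Polynomial.C (A i j)).map
        ((Polynomial.aeval z : Polynomial ℝ →ₐ[ℝ] ℂ) : Polynomial ℝ →+* ℂ)) := by
    ext i j
    simp only [toC, Matrix.sub_apply, Matrix.smul_apply, Matrix.map_apply, Matrix.of_apply,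
      RingHom.coe_coe, map_sub, _root_.map_mul, Polynomial.aeval_X, Polynomial.aeval_C,
      Complex.coe_algebraMap, smul_eq_mul]
    ring
  rw [hM, Matrix.det_smul, ← RingHom.mapMatrix_apply, ← RingHom.map_det]
  rfl

lemma qp_fromBlocks (P : Matrix l l ℝ) (W : Matrix l κ ℝ) (Q : Matrix κ κ ℝ)
    (S : Matrix l l ℝ) (T : Matrix κ κ ℝ) :
    qp (Matrix.fromBlocks P W 0 Q) (Matrix.fromBlocks S 0 0 T) = qp P S * qp Q T := by
  unfold qp
  have h : (Matrix.of fun i j => Polynomial.X * Polynomial.C ((Matrix.fromBlocks S 0 0 T) i j)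
        - Polynomial.C ((Matrix.fromBlocks P W 0 Q) i j))
      = Matrix.fromBlocks
          (Matrix.of fun i j => Polynomial.X * Polynomial.C (S i j) - Polynomial.C (P i j))
          (Matrix.of fun i j => -Polynomial.C (W i j)) 0
          (Matrix.of fun i j => Polynomial.X * Polynomial.C (T i j) - Polynomial.C (Q i j)) := by
    ext (i | i) (j | j) <;> simp [Matrix.fromBlocks]
  rw [h, Matrix.det_fromBlocks_zero₂₁]

lemma pencilRF_fromBlocks (P : Matrix l l ℝ) (W : Matrix l κ ℝ) (Q : Matrix κ κ ℝ)
    (S : Matrix l l ℝ) (T : Matrix κ κ ℝ) :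
    pencilRF (Matrix.fromBlocks P W 0 Q) (Matrix.fromBlocks S 0 0 T)
      = Matrix.fromBlocks (pencilRF P S) (toRF W) 0 (pencilRF Q T) := by
  ext (i | i) (j | j) <;> simp [pencilRF, toRF, Matrix.fromBlocks]

lemma toC_sub_smul_fromBlocks (P : Matrix l l ℝ) (W : Matrix l κ ℝ) (Q : Matrix κ κ ℝ)
    (S : Matrix l l ℝ) (T : Matrix κ κ ℝ) (z : ℂ) :
    toC (Matrix.fromBlocks P W 0 Q) - z • toC (Matrix.fromBlocks S 0 0 T)
      = Matrix.fromBlocks (toC P - z • toC S) (toC W) 0 (toC Q - z • toC T) := by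
  ext (i | i) (j | j) <;> simp [toC, Matrix.fromBlocks]

lemma qp_of_isUnit (P S : Matrix l l ℝ) (hS : IsUnit S.det) :
    qp P S = Polynomial.C S.det * (S⁻¹ * P).charpoly := by
  have hSP : S * (S⁻¹ * P) = P := by
    rw [← Matrix.mul_assoc, Matrix.mul_nonsing_inv S hS, Matrix.one_mul]
  have hsc : Matrix.scalar l (Polynomial.X : Polynomial ℝ)
      = (Polynomial.X : Polynomial ℝ) • (1 : Matrix l l (Polynomial ℝ)) := by
    rw [Matrix.scalar_apply]
    ext i j
    by_cases h : i = j <;> simp [h, Matrix.one_apply, Matrix.diagonal_apply]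
  have h1 : (Matrix.of fun i j => Polynomial.X * Polynomial.C (S i j) - Polynomial.C (P i j))
      = S.map Polynomial.C * Matrix.charmatrix (S⁻¹ * P) := by
    rw [Matrix.charmatrix, RingHom.mapMatrix_apply, Matrix.mul_sub, hsc, mul_smul_comm,
      Matrix.mul_one, ← Matrix.map_mul, hSP]
    ext i j
    simp [Matrix.map_apply, smul_eq_mul]
  show (Matrix.of fun i j => Polynomial.X * Polynomial.C (S i j) - Polynomial.C (P i j)).det = _
  rw [h1, Matrix.det_mul, ← RingHom.mapMatrix_apply, ← RingHom.map_det]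
  rfl

lemma qp_ne_zero_of_isUnit (P S : Matrix l l ℝ) (hS : IsUnit S.det) : qp P S ≠ 0 := by
  rw [qp_of_isUnit P S hS]
  exact mul_ne_zero (Polynomial.C_ne_zero.mpr hS.ne_zero) (Matrix.charpoly_monic _).ne_zero

lemma qp_natDegree_of_isUnit (P S : Matrix l l ℝ) (hS : IsUnit S.det) :
    (qp P S).natDegree = Fintype.card l := by
  rw [qp_of_isUnit P S hS, Polynomial.natDegree_C_mul hS.ne_zero,
    Matrix.charpoly_natDegree_eq_dim]

lemma range_prodMap' {R M₁ M₂ N₁ N₂ : Type*} [CommRing R] [AddCommGroup M₁] [AddCommGroup M₂]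
    [AddCommGroup N₁] [AddCommGroup N₂] [Module R M₁] [Module R M₂] [Module R N₁] [Module R N₂]
    (f : M₁ →ₗ[R] N₁) (g : M₂ →ₗ[R] N₂) :
    LinearMap.range (f.prodMap g) = (LinearMap.range f).prod (LinearMap.range g) := by
  ext ⟨x, y⟩
  constructor
  · rintro ⟨⟨a, b⟩, h⟩
    exact ⟨⟨a, (Prod.ext_iff.mp h).1⟩, ⟨b, (Prod.ext_iff.mp h).2⟩⟩
  · rintro ⟨⟨a, ha⟩, ⟨b, hb⟩⟩
    exact ⟨(a, b), Prod.ext ha hb⟩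

/-- A product of submodules is equivalent to the product of the submodules. -/
def prodSubEquiv {R M N : Type*} [CommRing R] [AddCommGroup M] [AddCommGroup N]
    [Module R M] [Module R N] (p : Submodule R M) (q : Submodule R N) :
    (p.prod q) ≃ₗ[R] p × q where
  toFun x := (⟨x.1.1, x.2.1⟩, ⟨x.1.2, x.2.2⟩)
  map_add' _ _ := rfl
  map_smul' _ _ := rfl
  invFun y := ⟨(y.1.1, y.2.1), ⟨y.1.2, y.2.2⟩⟩
  left_inv _ := rfl
  right_inv _ := rfl

lemma rank_fromBlocks_diag (M : Matrix l l ℝ) (N : Matrix κ κ ℝ) :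
    (Matrix.fromBlocks M 0 0 N).rank = M.rank + N.rank := by
  set e := LinearEquiv.sumArrowLequivProdArrow l κ ℝ ℝ with he
  have h : (Matrix.fromBlocks M 0 0 N).mulVecLin
      = e.symm.toLinearMap ∘ₗ ((M.mulVecLin.prodMap N.mulVecLin) ∘ₗ e.toLinearMap) := by
    apply LinearMap.ext; intro v
    have hev : e v = (v ∘ Sum.inl, v ∘ Sum.inr) := rfl
    funext i
    cases i with
    | inl i =>
        simp [Matrix.mulVecLin_apply, Matrix.fromBlocks_mulVec, Matrix.zero_mulVec, hev, e]
    | inr i =>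
        simp [Matrix.mulVecLin_apply, Matrix.fromBlocks_mulVec, Matrix.zero_mulVec, hev, e]
  rw [Matrix.rank, h, LinearMap.range_comp, LinearMap.range_comp, LinearEquiv.range,
    Submodule.map_top, LinearEquiv.finrank_map_eq, range_prodMap',
    LinearEquiv.finrank_eq (prodSubEquiv _ _), Module.finrank_prod]
  rfl

lemma key_admissible {a b : Type*} [Fintype a] [DecidableEq a] [Fintype b] [DecidableEq b]
    (S P : Matrix a a ℝ) (hS : IsUnit S.det)
    (hP : ∀ z : ℂ, (toC P - z • toC S).det = 0 → z.re < 0)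
    (T Q : Matrix b b ℝ) (hQ : Admissible Q T) (W : Matrix a b ℝ) :
    Admissible (Matrix.fromBlocks P W 0 Q) (Matrix.fromBlocks S 0 0 T) := by
  obtain ⟨hreg, heig, hdeg⟩ := hQ
  have hqQ : qp Q T ≠ 0 := (det_pencilRF_ne_zero_iff Q T).mp hreg
  have hqP : qp P S ≠ 0 := qp_ne_zero_of_isUnit P S hS
  refine ⟨?_, ?_, ?_⟩
  · rw [det_pencilRF_ne_zero_iff, qp_fromBlocks]
    exact mul_ne_zero hqP hqQ
  · intro z hz
    rw [toC_sub_smul_fromBlocks, Matrix.det_fromBlocks_zero₂₁] at hz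
    rcases mul_eq_zero.mp hz with h | h
    · exact hP z h
    · exact heig z h
  · show (qp (Matrix.fromBlocks P W 0 Q) (Matrix.fromBlocks S 0 0 T)).natDegree = _
    rw [qp_fromBlocks, Polynomial.natDegree_mul hqP hqQ, qp_natDegree_of_isUnit P S hS,
      rank_fromBlocks_diag, Matrix.rank_of_isUnit S ((Matrix.isUnit_iff_isUnit_det S).mpr hS)]
    have hdeg' : (qp Q T).natDegree = T.rank := hdeg
    rw [hdeg']

end Aux

/-- the composite descriptor realization of the generalized plant's
(2,2)-block admits admissible state-feedback and output-injection matrices,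
obtained by zero-padding feedbacks that are admissible for the (A, E) part. -/
theorem stmt_10 {nr n m p : ℕ}
    (Er Ar : Matrix (Fin nr) (Fin nr) ℝ) (hEr : IsUnit Er.det)
    (hAr : ∀ z : ℂ, (toC Ar - z • toC Er).det = 0 → z.re < 0)
    (E A : Matrix (Fin n) (Fin n) ℝ) (hreg : (pencilRF A E).det ≠ 0)
    (Br : Matrix (Fin nr) (Fin m) ℝ) (B : Matrix (Fin n) (Fin m) ℝ)
    (C : Matrix (Fin p) (Fin n) ℝ) (F : Matrix (Fin m) (Fin n) ℝ)
    (Ftil : Matrix (Fin m) (Fin n) ℝ) (hFtil : Admissible (A + B * Ftil) E)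
    (Htil : Matrix (Fin n) (Fin p) ℝ) (hHtil : Admissible (A + Htil * C) E)
    (E₂₂ : Matrix (Fin nr ⊕ Fin n) (Fin nr ⊕ Fin n) ℝ)
    (hE₂₂ : E₂₂ = Matrix.fromBlocks Er 0 0 E)
    (A₂₂ : Matrix (Fin nr ⊕ Fin n) (Fin nr ⊕ Fin n) ℝ)
    (hA₂₂ : A₂₂ = Matrix.fromBlocks Ar (-(Br * F)) 0 A)
    (B₂₂ : Matrix (Fin nr ⊕ Fin n) (Fin m) ℝ) (hB₂₂ : B₂₂ = Matrix.fromRows Br B)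
    (C₂₂ : Matrix (Fin p) (Fin nr ⊕ Fin n) ℝ) (hC₂₂ : C₂₂ = Matrix.fromCols 0 C)
    (Fhat : Matrix (Fin m) (Fin nr ⊕ Fin n) ℝ) (hFhat : Fhat = Matrix.fromCols 0 Ftil)
    (Hhat : Matrix (Fin nr ⊕ Fin n) (Fin p) ℝ) (hHhat : Hhat = Matrix.fromRows 0 Htil) :
    Admissible (A₂₂ + B₂₂ * Fhat) E₂₂ ∧ Admissible (A₂₂ + Hhat * C₂₂) E₂₂ := by
  subst hE₂₂ hA₂₂ hB₂₂ hC₂₂ hFhat hHhat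
  have h1 : Matrix.fromBlocks Ar (-(Br * F)) 0 A + Matrix.fromRows Br B * Matrix.fromCols 0 Ftil
      = Matrix.fromBlocks Ar (-(Br * F) + Br * Ftil) 0 (A + B * Ftil) := by
    rw [Matrix.fromRows_mul_fromCols]
    ext (i | i) (j | j) <;> simp [Matrix.fromBlocks]
  have h2 : Matrix.fromBlocks Ar (-(Br * F)) 0 A + Matrix.fromRows 0 Htil * Matrix.fromCols 0 C
      = Matrix.fromBlocks Ar (-(Br * F)) 0 (A + Htil * C) := by
    rw [Matrix.fromRows_mul_fromCols]
    ext (i | i) (j | j) <;> simp [Matrix.fromBlocks]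
  constructor
  · rw [h1]
    exact key_admissible Er Ar hEr hAr E (A + B * Ftil) hFtil (-(Br * F) + Br * Ftil)
  · rw [h2]
    exact key_admissible Er Ar hEr hAr E (A + Htil * C) hHtil (-(Br * F))


end
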